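/- Let I be a monomial ideal of S of Borel type and let P be a monomial prime ideal of S. Then J(I,P) is a monomial ideal of Borel type. -/

import Mathlib

set_option maxHeartbeats 1000000


open MvPolynomial

/-- An ideal of `K[x_1, …, x_n]` is a monomial ideal if it is generated by monomials. -/
def IsMonomialIdeal {K : Type*} [Field K] {n : ℕ} (I : Ideal (MvPolynomial (Fin n) K)) : Prop :=
  ∃ G : Set (Fin n →₀ ℕ),
    I = Ideal.span ((fun a => (monomial a (1 : K) : MvPolynomial (Fin n) K)) '' G)

/-- A monomial ideal `I` is of Borel type if for every monomial `u ∈ I` and all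
`i < j`, `s ≥ 1` with `x_j ^ s ∣ u`, there is `t ≥ 0` with `x_i ^ t * (u / x_j ^ s) ∈ I`. -/
def IsBorelType {K : Type*} [Field K] {n : ℕ} (I : Ideal (MvPolynomial (Fin n) K)) : Prop :=
  ∀ a : Fin n →₀ ℕ, (monomial a (1 : K) : MvPolynomial (Fin n) K) ∈ I →
    ∀ i j : Fin n, i < j → ∀ s : ℕ, 1 ≤ s → s ≤ a j →
      ∃ t : ℕ,
        (monomial (a - Finsupp.single j s + Finsupp.single i t) (1 : K) :
          MvPolynomial (Fin n) K) ∈ I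

/-- The monomial prime ideal `P_B = ⟨x_i : i ∈ B⟩`. -/
noncomputable def monomialPrime (K : Type*) [Field K] {n : ℕ} (B : Finset (Fin n)) :
    Ideal (MvPolynomial (Fin n) K) :=
  Ideal.span ((fun i => (X i : MvPolynomial (Fin n) K)) '' ↑B)

/-- `J(I, P) = {f : f * g ∈ I for some g ∉ P}`, the kernel of `S → (S/I)_P`, as a set. -/
def JSet {K : Type*} [Field K] {n : ℕ} (I P : Ideal (MvPolynomial (Fin n) K)) :
    Set (MvPolynomial (Fin n) K) :=
  {f | ∃ g, g ∉ P ∧ f * g ∈ I}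

namespace JSetAux

variable {K : Type*} [Field K] {n : ℕ}

/-- Restriction of an exponent vector to the variables in `B`. -/
noncomputable def res (B : Finset (Fin n)) (a : Fin n →₀ ℕ) : Fin n →₀ ℕ :=
  Finsupp.filter (fun i => i ∈ B) a

lemma res_apply (B : Finset (Fin n)) (a : Fin n →₀ ℕ) (i : Fin n) :
    res B a i = if i ∈ B then a i else 0 := rfl

lemma res_add (B : Finset (Fin n)) (a b : Fin n →₀ ℕ) :
    res B (a + b) = res B a + res B b := by
  classical
  ext i
  simp only [res_apply, Finsupp.add_apply]
  split <;> simp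

lemma res_le_self (B : Finset (Fin n)) (a : Fin n →₀ ℕ) : res B a ≤ a := by
  rw [Finsupp.le_def]
  intro i
  rw [res_apply]
  split <;> simp

lemma res_mono (B : Finset (Fin n)) {a b : Fin n →₀ ℕ} (h : a ≤ b) :
    res B a ≤ res B b := by
  rw [Finsupp.le_def] at h ⊢
  intro i
  rw [res_apply, res_apply]
  split
  · exact h i
  · exact le_rfl

lemma res_res (B : Finset (Fin n)) (a : Fin n →₀ ℕ) : res B (res B a) = res B a := by
  ext i
  simp only [res_apply]
  split <;> simp_all

/-- coefficient of a sum of monomials indexed by a finset of exponents -/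
lemma coeff_sum_monomial (s : Finset (Fin n →₀ ℕ)) (v : (Fin n →₀ ℕ) → K) (c : Fin n →₀ ℕ) :
    coeff c (∑ b ∈ s, (monomial b (v b) : MvPolynomial (Fin n) K))
      = if c ∈ s then v c else 0 := by
  classical
  rw [coeff_sum]
  simp only [coeff_monomial]
  exact Finset.sum_ite_eq' s c v

lemma monomial_mem_span {G : Set (Fin n →₀ ℕ)} {a d : Fin n →₀ ℕ} (haG : a ∈ G) (h : a ≤ d)
    (r : K) :
    (monomial d r : MvPolynomial (Fin n) K) ∈
      Ideal.span ((fun a => (monomial a (1 : K) : MvPolynomial (Fin n) K)) '' G) := by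
  have h1 : (monomial a (1 : K) : MvPolynomial (Fin n) K) ∈
      Ideal.span ((fun a => (monomial a (1 : K) : MvPolynomial (Fin n) K)) '' G) :=
    Ideal.subset_span ⟨a, haG, rfl⟩
  have h2 : (monomial d r : MvPolynomial (Fin n) K) = monomial (d - a) r * monomial a 1 := by
    rw [monomial_mul, mul_one, tsub_add_cancel_of_le h]
  rw [h2]
  exact Ideal.mul_mem_left _ _ h1

lemma monomial_mem_span_iff {G : Set (Fin n →₀ ℕ)} {c : Fin n →₀ ℕ} :
    (monomial c (1 : K) : MvPolynomial (Fin n) K) ∈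
      Ideal.span ((fun a => (monomial a (1 : K) : MvPolynomial (Fin n) K)) '' G)
      ↔ ∃ a ∈ G, a ≤ c := by
  rw [mem_ideal_span_monomial_image]
  simp [support_monomial]

/-- The candidate ideal `J`. -/
noncomputable def Jideal (K : Type*) [Field K] {n : ℕ} (B : Finset (Fin n))
    (G : Set (Fin n →₀ ℕ)) : Ideal (MvPolynomial (Fin n) K) :=
  Ideal.span ((fun a => (monomial a (1 : K) : MvPolynomial (Fin n) K)) '' (res B '' G))

lemma mem_J_iff {B : Finset (Fin n)} {G : Set (Fin n →₀ ℕ)} {f : MvPolynomial (Fin n) K} :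
    f ∈ Jideal K B G ↔ ∀ b ∈ f.support, ∃ a ∈ G, res B a ≤ b := by
  rw [Jideal, mem_ideal_span_monomial_image]
  constructor
  · intro h b hb
    obtain ⟨si, hsi, hle⟩ := h b hb
    obtain ⟨a, haG, rfl⟩ := hsi
    exact ⟨a, haG, hle⟩
  · intro h b hb
    obtain ⟨a, haG, hle⟩ := h b hb
    exact ⟨res B a, ⟨a, haG, rfl⟩, hle⟩

lemma monomial_mem_J_iff {B : Finset (Fin n)} {G : Set (Fin n →₀ ℕ)} {c : Fin n →₀ ℕ} :
    (monomial c (1 : K) : MvPolynomial (Fin n) K) ∈ Jideal K B G ↔ ∃ a ∈ G, res B a ≤ c := by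
  rw [Jideal, monomial_mem_span_iff]
  constructor
  · rintro ⟨_, ⟨a, haG, rfl⟩, h⟩
    exact ⟨a, haG, h⟩
  · rintro ⟨a, haG, h⟩
    exact ⟨res B a, ⟨a, haG, rfl⟩, h⟩

/-- The key lemma: `J` is "saturated" with respect to elements outside `P_B`. -/
lemma mem_J_of_mul {B : Finset (Fin n)} {G : Set (Fin n →₀ ℕ)} {f g : MvPolynomial (Fin n) K}
    (hfg : f * g ∈ Jideal K B G) (hg : g ∉ monomialPrime K B) : f ∈ Jideal K B G := by
  classical
  set Bad : (Fin n →₀ ℕ) → Prop := fun b => ¬ ∃ a ∈ G, res B a ≤ b with hBad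
  set f' : MvPolynomial (Fin n) K :=
    ∑ b ∈ f.support.filter (fun b => Bad b), monomial b (coeff b f) with hf'
  set fJ : MvPolynomial (Fin n) K :=
    ∑ b ∈ f.support.filter (fun b => ¬ Bad b), monomial b (coeff b f) with hfJ
  have hcoef' : ∀ c, coeff c f' = if c ∈ f.support.filter (fun b => Bad b) then coeff c f else 0 := by
    intro c
    rw [hf', coeff_sum_monomial]
  have hsplit : f = f' + fJ := by
    conv_lhs => rw [as_sum f]
    rw [hf', hfJ, Finset.sum_filter_add_sum_filter_not]
  have hfJmem : fJ ∈ Jideal K B G := by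
    apply Ideal.sum_mem
    intro b hb
    rw [Finset.mem_filter] at hb
    obtain ⟨a, haG, hle⟩ := not_not.mp hb.2
    exact monomial_mem_span (Set.mem_image_of_mem _ haG) hle _
  have hf'g : f' * g ∈ Jideal K B G := by
    have h1 : f' = f - fJ := by rw [hsplit]; ring
    rw [h1, sub_mul]
    exact Ideal.sub_mem _ hfg (Ideal.mul_mem_right _ _ hfJmem)
  have hf'0 : f' = 0 := by
    by_contra hne
    -- a monomial of g with exponents supported off B
    have hgP : ∃ e ∈ g.support, res B e = 0 := by
      have : ¬ ∀ m ∈ g.support, ∃ i ∈ (↑B : Set (Fin n)), m i ≠ 0 := by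
        intro hc
        exact hg (mem_ideal_span_X_image.mpr hc)
      push_neg at this
      obtain ⟨e, he, h0⟩ := this
      refine ⟨e, he, ?_⟩
      ext i
      rw [res_apply]
      split
      · next h => exact h0 i h
      · rfl
    obtain ⟨e₀, he₀, hres₀⟩ := hgP
    have hS : (f'.support.image (fun b => toLex (res B b))).Nonempty :=
      (support_nonempty.mpr hne).image _
    set βL := (f'.support.image (fun b => toLex (res B b))).min' hS with hβL
    obtain ⟨b₀, hb₀, hb₀L⟩ := Finset.mem_image.mp ((f'.support.image _).min'_mem hS)
    set f₁ : MvPolynomial (Fin n) K :=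
      ∑ b ∈ f'.support.filter (fun b => toLex (res B b) = βL), monomial b (coeff b f') with hf₁
    set g₀ : MvPolynomial (Fin n) K :=
      ∑ e ∈ g.support.filter (fun e => res B e = 0), monomial e (coeff e g) with hg₀
    have hcoef₁ : ∀ c, coeff c f₁ =
        if c ∈ f'.support.filter (fun b => toLex (res B b) = βL) then coeff c f' else 0 := by
      intro c
      rw [hf₁, coeff_sum_monomial]
    have hcoef₀ : ∀ c, coeff c g₀ =
        if c ∈ g.support.filter (fun e => res B e = 0) then coeff c g else 0 := by
      intro c
      rw [hg₀, coeff_sum_monomial]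
    have hf₁ne : f₁ ≠ 0 := by
      rw [MvPolynomial.ne_zero_iff]
      refine ⟨b₀, ?_⟩
      have hmemb : b₀ ∈ f'.support.filter (fun b => toLex (res B b) = βL) :=
        Finset.mem_filter.mpr ⟨hb₀, by rw [hb₀L, hβL]⟩
      rw [hcoef₁ b₀, if_pos hmemb]
      exact mem_support_iff.mp hb₀
    have hg₀ne : g₀ ≠ 0 := by
      rw [MvPolynomial.ne_zero_iff]
      refine ⟨e₀, ?_⟩
      have hmeme : e₀ ∈ g.support.filter (fun e => res B e = 0) :=
        Finset.mem_filter.mpr ⟨he₀, hres₀⟩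
      rw [hcoef₀ e₀, if_pos hmeme]
      exact mem_support_iff.mp he₀
    obtain ⟨δ, hδ⟩ := MvPolynomial.ne_zero_iff.mp (mul_ne_zero hf₁ne hg₀ne)
    -- δ has B-restriction βL
    have hδeq : coeff δ (f₁ * g₀) = ∑ x ∈ Finset.HasAntidiagonal.antidiagonal δ, coeff x.1 f₁ * coeff x.2 g₀ :=
      coeff_mul _ _ _
    have hsum : (∑ x ∈ Finset.HasAntidiagonal.antidiagonal δ, coeff x.1 f₁ * coeff x.2 g₀) ≠ 0 := by
      rw [← hδeq]; exact hδ
    obtain ⟨⟨b₁, e₁⟩, hmem₁, hne₁⟩ := Finset.exists_ne_zero_of_sum_ne_zero hsum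
    have hb₁ : b₁ ∈ f'.support.filter (fun b => toLex (res B b) = βL) := by
      by_contra hc
      rw [hcoef₁ b₁, if_neg hc, zero_mul] at hne₁
      exact hne₁ rfl
    have he₁ : e₁ ∈ g.support.filter (fun e => res B e = 0) := by
      by_contra hc
      rw [hcoef₀ e₁, if_neg hc, mul_zero] at hne₁
      exact hne₁ rfl
    have hδsum : b₁ + e₁ = δ := Finset.HasAntidiagonal.mem_antidiagonal.mp hmem₁
    have hδres : toLex (res B δ) = βL := by
      rw [← hδsum, res_add, (Finset.mem_filter.mp he₁).2, add_zero,
        (Finset.mem_filter.mp hb₁).2]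
    -- coefficients agree
    have hcoefeq : coeff δ (f' * g) = coeff δ (f₁ * g₀) := by
      rw [coeff_mul, coeff_mul]
      refine Finset.sum_congr rfl ?_
      rintro ⟨b, e⟩ hbe
      have hbe' : b + e = δ := Finset.HasAntidiagonal.mem_antidiagonal.mp hbe
      simp only
      by_cases hb : coeff b f' = 0
      · rw [hcoef₁ b, hb]
        split <;> simp
      by_cases he : coeff e g = 0
      · rw [hcoef₀ e, he]
        split <;> simp
      have hbsup : b ∈ f'.support := mem_support_iff.mpr hb
      have hesup : e ∈ g.support := mem_support_iff.mpr he
      have h1 : βL ≤ toLex (res B b) :=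
        Finset.min'_le _ _ (Finset.mem_image.mpr ⟨b, hbsup, rfl⟩)
      have h2 : toLex (res B b) ≤ βL := by
        rw [← hδres, ← hbe', res_add]
        exact Finsupp.toLex_monotone le_self_add
      have h3 : toLex (res B b) = βL := le_antisymm h2 h1
      have h4 : res B e = 0 := by
        have h5 : res B b + res B e = res B b := by
          rw [← res_add, hbe']
          exact toLex.injective (by rw [hδres, h3])
        exact add_eq_left.mp h5
      have hmb : b ∈ f'.support.filter (fun b => toLex (res B b) = βL) :=
        Finset.mem_filter.mpr ⟨hbsup, h3⟩
      have hme : e ∈ g.support.filter (fun e => res B e = 0) :=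
        Finset.mem_filter.mpr ⟨hesup, h4⟩
      rw [hcoef₁ b, if_pos hmb, hcoef₀ e, if_pos hme]
    have hδsupp : δ ∈ (f' * g).support := by
      rw [mem_support_iff, hcoefeq]
      exact hδ
    obtain ⟨a, haG, hle⟩ := mem_J_iff.mp hf'g δ hδsupp
    -- contradiction: b₁ would be good
    have hBadb₁ : Bad b₁ := by
      have := (Finset.mem_filter.mp hb₁).1
      have hb₁f : b₁ ∈ f.support.filter (fun b => Bad b) := by
        by_contra hc
        have := hcoef' b₁
        rw [if_neg hc] at this
        exact (mem_support_iff.mp (Finset.mem_filter.mp hb₁).1) this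
      exact (Finset.mem_filter.mp hb₁f).2
    apply hBadb₁
    refine ⟨a, haG, ?_⟩
    have h6 : res B a ≤ res B δ := by
      rw [← res_res B a]
      exact res_mono B hle
    have h7 : res B δ = res B b₁ := by
      rw [← hδsum, res_add, (Finset.mem_filter.mp he₁).2, add_zero]
    calc res B a ≤ res B δ := h6
      _ = res B b₁ := h7
      _ ≤ b₁ := res_le_self B b₁
  rw [hsplit, hf'0, zero_add]
  exact hfJmem

/-- The all-ones vector off `B`. -/
noncomputable def chi (B : Finset (Fin n)) : Fin n →₀ ℕ := ∑ i ∈ Bᶜ, Finsupp.single i 1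

lemma chi_apply (B : Finset (Fin n)) (i : Fin n) : chi B i = if i ∈ B then 0 else 1 := by
  classical
  rw [chi, Finsupp.finset_sum_apply]
  simp only [Finsupp.single_apply]
  rw [Finset.sum_ite_eq' Bᶜ i (fun _ => 1)]
  by_cases h : i ∈ B <;> simp [h]

lemma le_add_smul_chi {B : Finset (Fin n)} {a c : Fin n →₀ ℕ} {k : ℕ}
    (h : res B a ≤ c) (hk : ∀ i, a i ≤ k) : a ≤ c + k • chi B := by
  rw [Finsupp.le_def]
  intro i
  rw [Finsupp.add_apply, Finsupp.smul_apply, chi_apply, smul_eq_mul]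
  by_cases hiB : i ∈ B
  · have h1 := Finsupp.le_def.mp h i
    rw [res_apply, if_pos hiB] at h1
    rw [if_pos hiB]
    omega
  · have h1 := hk i
    rw [if_neg hiB]
    omega

lemma monomial_chi_notMem_prime (B : Finset (Fin n)) (k : ℕ) :
    (monomial (k • chi B) (1 : K) : MvPolynomial (Fin n) K) ∉ monomialPrime K B := by
  classical
  intro hmem
  rw [monomialPrime] at hmem
  have hmem' : (monomial (k • chi B) (1 : K) : MvPolynomial (Fin n) K) ∈
      Ideal.span (X '' (↑B : Set (Fin n))) := hmem
  rw [mem_ideal_span_X_image] at hmem'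
  have h1 : (k • chi B) ∈ (monomial (k • chi B) (1 : K) : MvPolynomial (Fin n) K).support := by
    rw [support_monomial, if_neg one_ne_zero]
    exact Finset.mem_singleton_self _
  obtain ⟨i, hiB, hi⟩ := hmem' _ h1
  apply hi
  have hiB' : i ∈ B := hiB
  rw [Finsupp.smul_apply, chi_apply, if_pos hiB', smul_zero]

end JSetAux

open JSetAux in
/-- If `I` is a monomial ideal of Borel type and `P` is a monomial prime ideal, then
`J(I, P)` is a monomial ideal of Borel type. -/
theorem JSet_borelType {K : Type*} [Field K] {n : ℕ}
    (I : Ideal (MvPolynomial (Fin n) K)) (hmon : IsMonomialIdeal I) (hBT : IsBorelType I)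
    (B : Finset (Fin n)) :
    ∃ J : Ideal (MvPolynomial (Fin n) K),
      (J : Set (MvPolynomial (Fin n) K)) = JSet I (monomialPrime K B) ∧
        IsMonomialIdeal J ∧ IsBorelType J := by
  classical
  obtain ⟨G, hG⟩ := hmon
  refine ⟨Jideal K B G, ?_, ⟨res B '' G, rfl⟩, ?_⟩
  · -- set equality
    ext f
    simp only [SetLike.mem_coe]
    constructor
    · -- J ⊆ JSet
      intro hf
      have h : ∀ b ∈ f.support, ∃ a ∈ G, res B a ≤ b := mem_J_iff.mp hf
      have hch : ∀ b : Fin n →₀ ℕ, ∃ a : Fin n →₀ ℕ, b ∈ f.support → a ∈ G ∧ res B a ≤ b := by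
        intro b
        by_cases hb : b ∈ f.support
        · obtain ⟨a, h1, h2⟩ := h b hb
          exact ⟨a, fun _ => ⟨h1, h2⟩⟩
        · exact ⟨0, fun hb' => absurd hb' hb⟩
      choose A hA using hch
      set k : ℕ := f.support.sup (fun b => Finset.univ.sup (fun i => A b i)) with hk
      refine ⟨monomial (k • chi B) 1, monomial_chi_notMem_prime B k, ?_⟩
      rw [hG]
      rw [show f * (monomial (k • chi B) (1 : K) : MvPolynomial (Fin n) K)
          = ∑ b ∈ f.support, monomial b (coeff b f) * monomial (k • chi B) 1 from by
        rw [← Finset.sum_mul, ← as_sum f]]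
      apply Ideal.sum_mem
      intro b hb
      rw [monomial_mul, mul_one]
      refine monomial_mem_span (hA b hb).1 ?_ _
      refine le_add_smul_chi (hA b hb).2 ?_
      intro i
      calc A b i ≤ Finset.univ.sup (fun i => A b i) :=
            Finset.le_sup (f := fun i => A b i) (Finset.mem_univ i)
        _ ≤ k := by
            rw [hk]
            exact Finset.le_sup (f := fun b => Finset.univ.sup (fun i => A b i)) hb
    · -- JSet ⊆ J
      rintro ⟨g, hgP, hfgI⟩
      have hIJ : f * g ∈ Jideal K B G := by
        have hle : I ≤ Jideal K B G := by
          rw [hG, Ideal.span_le]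
          rintro _ ⟨a, haG, rfl⟩
          exact SetLike.mem_coe.mpr (monomial_mem_J_iff.mpr ⟨a, haG, res_le_self B a⟩)
        exact hle hfgI
      exact mem_J_of_mul hIJ hgP
  · -- Borel type
    intro c hc i j hij s hs1 hsc
    obtain ⟨a, haG, hle⟩ := monomial_mem_J_iff.mp hc
    set k : ℕ := Finset.univ.sup (fun l => a l) with hk
    have hmemI : (monomial (c + k • chi B) (1 : K) : MvPolynomial (Fin n) K) ∈ I := by
      rw [hG]
      exact monomial_mem_span haG
        (le_add_smul_chi hle (fun l => Finset.le_sup (Finset.mem_univ l))) _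
    have hsc' : s ≤ (c + k • chi B) j := by
      rw [Finsupp.add_apply]
      exact le_trans hsc le_self_add
    obtain ⟨t, ht⟩ := hBT (c + k • chi B) hmemI i j hij s hs1 hsc'
    refine ⟨t, ?_⟩
    have hv : ∀ l, Finsupp.single j s l ≤ c l := by
      intro l
      rcases eq_or_ne j l with rfl | h
      · rwa [Finsupp.single_eq_same]
      · rw [Finsupp.single_eq_of_ne' h]
        exact Nat.zero_le _
    have heq : (c + k • chi B) - Finsupp.single j s + Finsupp.single i t
        = (c - Finsupp.single j s + Finsupp.single i t) + k • chi B := by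
      ext l
      simp only [Finsupp.add_apply, Finsupp.tsub_apply]
      have := hv l
      omega
    rw [heq, hG] at ht
    obtain ⟨a', ha'G, ha'le⟩ := monomial_mem_span_iff.mp ht
    refine monomial_mem_J_iff.mpr ⟨a', ha'G, ?_⟩
    rw [Finsupp.le_def]
    intro l
    rw [res_apply]
    split_ifs with hlB
    · have h1 := Finsupp.le_def.mp ha'le l
      rw [Finsupp.add_apply, Finsupp.smul_apply, chi_apply, if_pos hlB, smul_zero,
        add_zero] at h1
      exact h1
    · exact Nat.zero_le _
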